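/- The sequence s ↦ s·ν(s) = s·C(s-1,(s-1)/2)/2^{s-1}, over odd s, is strictly increasing and unbounded. -/

import Mathlib

noncomputable def gseq (k : ℕ) : ℝ := (2 * k + 1) * ((Nat.centralBinom k : ℝ) / 4 ^ k)

lemma gseq_pos (k : ℕ) : 0 < gseq k := by
  unfold gseq
  have h := Nat.centralBinom_pos k
  positivity

lemma gseq_succ (k : ℕ) : gseq (k + 1) = gseq k * ((2 * k + 3) / (2 * k + 2)) := by
  have h := Nat.succ_mul_centralBinom_succ k
  have h' : ((k : ℝ) + 1) * (Nat.centralBinom (k + 1) : ℝ)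
      = 2 * (2 * k + 1) * (Nat.centralBinom k : ℝ) := by
    exact_mod_cast congrArg (Nat.cast (R := ℝ)) h
  unfold gseq
  have hk : (k : ℝ) + 1 ≠ 0 := by positivity
  have h4 : (4 : ℝ) ^ k ≠ 0 := by positivity
  have hcb : (Nat.centralBinom (k + 1) : ℝ)
      = 2 * (2 * k + 1) * (Nat.centralBinom k : ℝ) / ((k : ℝ) + 1) := by
    field_simp
    linarith [h']
  rw [hcb]
  push_cast
  field_simp
  ring

lemma gseq_strictMono : StrictMono gseq := by
  apply strictMono_nat_of_lt_succ
  intro k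
  rw [gseq_succ]
  have h1 : (1 : ℝ) < (2 * k + 3) / (2 * k + 2) := by
    rw [lt_div_iff₀ (by positivity)]; linarith
  nlinarith [gseq_pos k]

lemma gseq_sq (k : ℕ) : (k : ℝ) + 1 ≤ gseq k ^ 2 := by
  induction k with
  | zero => simp [gseq, Nat.centralBinom]
  | succ k ih =>
    rw [gseq_succ]
    have h2 : (0 : ℝ) < 2 * k + 2 := by positivity
    have key : ((k : ℝ) + 2) * (2 * k + 2) ^ 2 + (k + 1) ≤ ((k : ℝ) + 1) * (2 * k + 3) ^ 2 := by
      ring_nf; nlinarith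
    have : ((k : ℝ) + 1) * ((2 * k + 3) / (2 * k + 2)) ^ 2 ≥ (k : ℝ) + 2 := by
      rw [ge_iff_le, div_pow, ← sub_nonneg]
      have : ((k : ℝ) + 1) * ((2 * k + 3) ^ 2 / (2 * k + 2) ^ 2) - ((k : ℝ) + 2)
          = (((k : ℝ) + 1) * (2 * k + 3) ^ 2 - ((k : ℝ) + 2) * (2 * k + 2) ^ 2) / (2 * k + 2) ^ 2 := by
        field_simp
      rw [this]
      apply div_nonneg _ (by positivity)
      nlinarith
    push_cast
    calc (k : ℝ) + 1 + 1 ≤ ((k : ℝ) + 1) * ((2 * k + 3) / (2 * k + 2)) ^ 2 := by linarith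
      _ ≤ gseq k ^ 2 * ((2 * k + 3) / (2 * k + 2)) ^ 2 := by
          apply mul_le_mul_of_nonneg_right ih (by positivity)
      _ = (gseq k * ((2 * k + 3) / (2 * k + 2))) ^ 2 := by ring

lemma expr_eq (k : ℕ) :
    ((2 * k + 1 : ℕ) : ℝ) * ((Nat.choose (2 * k + 1 - 1) ((2 * k + 1 - 1) / 2) : ℝ)
      / 2 ^ (2 * k + 1 - 1)) = gseq k := by
  have h1 : 2 * k + 1 - 1 = 2 * k := rfl
  have h2 : 2 * k / 2 = k := by omega
  rw [h1, h2]
  unfold gseq Nat.centralBinom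
  have : (2 : ℝ) ^ (2 * k) = 4 ^ k := by
    rw [pow_mul]; norm_num
  rw [this]
  push_cast
  ring

/-- The sequence `s ↦ s·ν(s) = s·C(s-1,(s-1)/2)/2^(s-1)`, over odd `s`, is strictly
increasing and unbounded. -/
theorem s_nu_strict_mono_unbounded :
    (∀ s t : ℕ, Odd s → Odd t → s < t →
      (s : ℝ) * ((Nat.choose (s - 1) ((s - 1) / 2) : ℝ) / 2 ^ (s - 1)) <
        (t : ℝ) * ((Nat.choose (t - 1) ((t - 1) / 2) : ℝ) / 2 ^ (t - 1))) ∧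
    (∀ C : ℝ, ∃ s : ℕ, Odd s ∧
      C < (s : ℝ) * ((Nat.choose (s - 1) ((s - 1) / 2) : ℝ) / 2 ^ (s - 1))) := by
  constructor
  · intro s t hs ht hst
    obtain ⟨a, ha⟩ := hs
    obtain ⟨b, hb⟩ := ht
    subst ha hb
    rw [expr_eq a, expr_eq b]
    exact gseq_strictMono (by omega)
  · intro C
    obtain ⟨k, hk⟩ := exists_nat_gt (max C 0 ^ 2)
    refine ⟨2 * k + 1, ⟨k, rfl⟩, ?_⟩
    rw [expr_eq k]
    have h1 : max C 0 ^ 2 < gseq k ^ 2 := lt_of_lt_of_le (by linarith [gseq_sq k]) (gseq_sq k)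
    have h2 : max C 0 < gseq k := by
      apply lt_of_pow_lt_pow_left₀ 2 (gseq_pos k).le h1
    exact lt_of_le_of_lt (le_max_left C 0) h2
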